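/- Let K be a symmetric kernel and G a probability measure, and let K_G be the G-centered kernel. Then for any probability measures F and G, the G-centered kernel generates the same quadratic distance as K: ∬ K_G(s,t) d(F-G)(s) d(F-G)(t) = ∬ K(s,t) d(F-G)(s) d(F-G)(t). Moreover, this common value equals ∬ K_G(s,t) dF(s) dF(t). -/

import Mathlib

open MeasureTheory

lemma centered_kernel_aux
    {X : Type*} [MeasurableSpace X]
    (K : X → X → ℝ) (hKsym : ∀ s t, K s t = K t s)
    (G μ ν : Measure X) [IsProbabilityMeasure G] [IsProbabilityMeasure μ]
    [IsProbabilityMeasure ν]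
    (h1 : Integrable (fun p : X × X => K p.1 p.2) (μ.prod ν))
    (h2 : Integrable (fun p : X × X => K p.1 p.2) (μ.prod G))
    (h3 : Integrable (fun p : X × X => K p.1 p.2) (ν.prod G))
    (KG : X → X → ℝ)
    (hKG : ∀ s t, KG s t =
      K s t - (∫ u, K s u ∂G) - (∫ u, K u t ∂G) + ∫ u, ∫ v, K u v ∂G ∂G) :
    ∫ s, ∫ t, KG s t ∂ν ∂μ =
      (∫ s, ∫ t, K s t ∂ν ∂μ) - (∫ s, ∫ t, K s t ∂G ∂μ)
        - (∫ s, ∫ t, K s t ∂G ∂ν) + ∫ s, ∫ t, K s t ∂G ∂G := by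
  set a : X → ℝ := fun s => ∫ u, K s u ∂G with ha
  set c : ℝ := ∫ u, ∫ v, K u v ∂G ∂G with hc
  have hb : ∀ t, (∫ u, K u t ∂G) = a t := fun t =>
    integral_congr_ae (Filter.Eventually.of_forall fun u => hKsym u t)
  have ha_ν : Integrable a ν := h3.integral_prod_left
  have ha_μ : Integrable a μ := h2.integral_prod_left
  have hf_μ : Integrable (fun s => ∫ t, K s t ∂ν) μ := h1.integral_prod_left
  set A : ℝ := ∫ t, a t ∂ν with hA
  have step1 : ∀ᵐ s ∂μ, (∫ t, KG s t ∂ν) = (∫ t, K s t ∂ν) - a s - A + c := by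
    filter_upwards [h1.prod_right_ae] with s hs
    have h4 : (fun t => KG s t) = fun t => (K s t - a t) + (c - a s) := by
      funext t
      rw [hKG, hb]
      ring
    have hsub : Integrable (fun t => K s t - a t) ν := hs.sub ha_ν
    rw [h4, integral_add hsub (integrable_const _),
      integral_sub hs ha_ν, integral_const, probReal_univ]
    simp
    ring
  rw [integral_congr_ae step1]
  have hsub1 : Integrable (fun s => (∫ t, K s t ∂ν) - a s) μ := hf_μ.sub ha_μ
  have hsub2 : Integrable (fun s => (∫ t, K s t ∂ν) - a s - A) μ :=
    hsub1.sub (integrable_const _)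
  rw [integral_add hsub2 (integrable_const _),
    integral_sub hsub1 (integrable_const _),
    integral_sub hf_μ ha_μ, integral_const, integral_const, probReal_univ]
  simp

/-- The `G`-centered kernel generates the same quadratic distance as `K`, and the
common value equals `∬ K_G(s,t) dF(s) dF(t)`. -/
theorem centered_kernel_same_quadratic_distance
    {X : Type*} [MeasurableSpace X]
    (K : X → X → ℝ) (hKsym : ∀ s t, K s t = K t s)
    (F G : Measure X) [IsProbabilityMeasure F] [IsProbabilityMeasure G]
    (hint : ∀ μ ν : Measure X, (μ = F ∨ μ = G) → (ν = F ∨ ν = G) →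
      Integrable (fun p : X × X => K p.1 p.2) (μ.prod ν))
    (KG : X → X → ℝ)
    (hKG : ∀ s t, KG s t =
      K s t - (∫ u, K s u ∂G) - (∫ u, K u t ∂G) + ∫ u, ∫ v, K u v ∂G ∂G) :
    ((∫ s, ∫ t, KG s t ∂F ∂F) - (∫ s, ∫ t, KG s t ∂G ∂F)
        - (∫ s, ∫ t, KG s t ∂F ∂G) + ∫ s, ∫ t, KG s t ∂G ∂G) =
      ((∫ s, ∫ t, K s t ∂F ∂F) - (∫ s, ∫ t, K s t ∂G ∂F)
        - (∫ s, ∫ t, K s t ∂F ∂G) + ∫ s, ∫ t, K s t ∂G ∂G) ∧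
    ((∫ s, ∫ t, KG s t ∂F ∂F) - (∫ s, ∫ t, KG s t ∂G ∂F)
        - (∫ s, ∫ t, KG s t ∂F ∂G) + ∫ s, ∫ t, KG s t ∂G ∂G) =
      ∫ s, ∫ t, KG s t ∂F ∂F := by
  have hFF := hint F F (Or.inl rfl) (Or.inl rfl)
  have hFG := hint F G (Or.inl rfl) (Or.inr rfl)
  have hGF := hint G F (Or.inr rfl) (Or.inl rfl)
  have hGG := hint G G (Or.inr rfl) (Or.inr rfl)
  have JFF := centered_kernel_aux K hKsym G F F hFF hFG hFG KG hKG
  have JFG := centered_kernel_aux K hKsym G F G hFG hFG hGG KG hKG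
  have JGF := centered_kernel_aux K hKsym G G F hGF hGG hFG KG hKG
  have JGG := centered_kernel_aux K hKsym G G G hGG hGG hGG KG hKG
  have hsym : (∫ s, ∫ t, K s t ∂G ∂F) = ∫ s, ∫ t, K s t ∂F ∂G := by
    rw [integral_integral_swap hFG]
    exact integral_congr_ae (Filter.Eventually.of_forall fun t =>
      integral_congr_ae (Filter.Eventually.of_forall fun s => hKsym s t))
  constructor
  · rw [JFF, JFG, JGF, JGG, hsym]
    ring
  · rw [JFF, JFG, JGF, JGG, hsym]
    ring
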